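/- For every subset J ⊆ I there is a unique functor from the Weyl groupoid of the restricted Cartan scheme C|_J to W(C) which is the identity on objects and sends σ_j^a to σ_j^a for j ∈ J; this functor is an isomorphism of groupoids onto the parabolic subgroupoid W_J(C). -/

import Mathlib

set_option linter.unusedSectionVars false

/-- A Cartan scheme `C = C(I, A, (ρ_i), (C^a))`. -/
structure CartanScheme (I A : Type) [Fintype I] [DecidableEq I] [Fintype A] [Nonempty A] where
  ρ : I → A → A
  c : A → I → I → ℤ
  ρ_invol : ∀ i a, ρ i (ρ i a) = a
  c_diag : ∀ a i, c a i i = 2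
  c_offdiag_nonpos : ∀ a i j, i ≠ j → c a i j ≤ 0
  c_zero_symm : ∀ a i j, c a i j = 0 → c a j i = 0
  c_rho : ∀ a i j, c (ρ i a) i j = c a i j

namespace CartanScheme

variable {I A : Type} [Fintype I] [DecidableEq I] [Fintype A] [Nonempty A] [DecidableEq A]
variable (C : CartanScheme I A)

/-- The simple reflection `σ_i^a` as a map `ℤ^I → ℤ^I`, `σ_i^a(α_j) = α_j - c^a_{ij} α_i`. -/
def sigma (a : A) (i : I) : (I → ℤ) → (I → ℤ) :=
  fun v k => v k - (if k = i then ∑ j, C.c a i j * v j else 0)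

/-- Target object of the word `[i_1, …, i_k]` read at source object `a`:
`ρ_{i_1} ⋯ ρ_{i_k}(a)`. -/
def wordTarget (a : A) : List I → A
  | [] => a
  | i :: l => C.ρ i (wordTarget a l)

/-- The map `σ_{i_1} ⋯ σ_{i_k}^a : ℤ^I → ℤ^I` determined by a word with source `a`. -/
def wordMap (a : A) : List I → ((I → ℤ) → (I → ℤ))
  | [] => id
  | i :: l => C.sigma (C.wordTarget a l) i ∘ wordMap a l

theorem wordTarget_append (a : A) (l₁ l₂ : List I) :
    C.wordTarget a (l₁ ++ l₂) = C.wordTarget (C.wordTarget a l₂) l₁ := by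
  induction l₁ with
  | nil => rfl
  | cons i l ih => simp [wordTarget, ih]

theorem wordMap_append (a : A) (l₁ l₂ : List I) :
    C.wordMap a (l₁ ++ l₂) = C.wordMap (C.wordTarget a l₂) l₁ ∘ C.wordMap a l₂ := by
  induction l₁ with
  | nil => rfl
  | cons i l ih => simp [wordMap, ih, wordTarget_append, Function.comp_assoc]

/-- A morphism of the Weyl groupoid `W(C)`: a source object, a target object, and a map
`ℤ^I → ℤ^I` which is a composition of simple reflections along some word. -/
@[ext]
structure Mor where
  src : A
  tgt : A
  toFun : (I → ℤ) → (I → ℤ)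
  spec : ∃ l : List I, C.wordTarget src l = tgt ∧ C.wordMap src l = toFun

variable {C}

/-- A word realizes a morphism. -/
def Realizes (w : Mor C) (l : List I) : Prop :=
  C.wordTarget w.src l = w.tgt ∧ C.wordMap w.src l = w.toFun

variable (C)

/-- The identity morphism `id^a`. -/
def idMor (a : A) : Mor C := ⟨a, a, id, ⟨[], rfl, rfl⟩⟩

/-- The generator `σ_i^a ∈ Hom(a, ρ_i(a))`. -/
def genMor (i : I) (a : A) : Mor C :=
  ⟨a, C.ρ i a, C.sigma a i, ⟨[i], rfl, Function.comp_id _⟩⟩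

/-- The simple reflection with target `a`, i.e. `id^a σ_i = σ_i^{ρ_i(a)} ∈ Hom(ρ_i(a), a)`. -/
def sgen (a : A) (i : I) : Mor C :=
  { src := C.ρ i a, tgt := a, toFun := C.sigma (C.ρ i a) i,
    spec := ⟨[i], by simp [wordTarget, C.ρ_invol], Function.comp_id _⟩ }

variable {C}

/-- Composition `u ∘ v` (with `v` applied first); junk value `u` if not composable. -/
def Mor.comp (u v : Mor C) : Mor C :=
  if h : v.tgt = u.src then
    { src := v.src, tgt := u.tgt, toFun := u.toFun ∘ v.toFun,
      spec := by
        obtain ⟨lu, hu1, hu2⟩ := u.spec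
        obtain ⟨lv, hv1, hv2⟩ := v.spec
        refine ⟨lu ++ lv, ?_, ?_⟩
        · rw [C.wordTarget_append, hv1, h, hu1]
        · rw [C.wordMap_append, hv1, h, hu2, hv2] }
  else u

/-- Length of a morphism: minimal length of a realizing word. -/
noncomputable def len (w : Mor C) : ℕ := sInf {k | ∃ l : List I, Realizes w l ∧ l.length = k}

/-- A reduced decomposition. -/
def IsReduced (w : Mor C) (l : List I) : Prop := Realizes w l ∧ l.length = len w

/-- The (right) weak order: `u ≤_R uv` iff `ℓ(uv) = ℓ(u) + ℓ(v)`. -/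
def weakLe (u w : Mor C) : Prop :=
  ∃ v : Mor C, v.tgt = u.src ∧ w = u.comp v ∧ len w = len u + len v

/-- Membership in the parabolic subgroupoid `W_J(C)`. -/
def InParabolic (J : Set I) (w : Mor C) : Prop :=
  ∃ l : List I, (∀ i ∈ l, i ∈ J) ∧ Realizes w l

/-- Length with respect to the generators `σ_j`, `j ∈ J`. -/
noncomputable def lenPar (J : Set I) (w : Mor C) : ℕ :=
  sInf {k | ∃ l : List I, (∀ i ∈ l, i ∈ J) ∧ Realizes w l ∧ l.length = k}

/-- The set of letters occurring in some reduced decomposition of `w`;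
by the theorem on reduced decompositions this is the set `J(w)`. -/
def Jset (w : Mor C) : Set I := {i | ∃ l : List I, IsReduced w l ∧ i ∈ l}

variable (C)

/-- The set of real roots at the object `a`. -/
def roots (a : A) : Set (I → ℤ) :=
  {α | ∃ (b : A) (l : List I) (j : I),
    C.wordTarget b l = a ∧ α = C.wordMap b l (Pi.single j 1)}

/-- The set of positive (real) roots at `a`. -/
def posRoots (a : A) : Set (I → ℤ) := {α ∈ C.roots a | ∀ i, 0 ≤ α i}

/-- `R^re(C)` is a finite root system of type `C`: axioms (R1), (R2), (R4) and finiteness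
((R3) holds automatically for real roots). -/
def IsFRS : Prop :=
  (∀ a : A, (C.roots a).Finite) ∧
  (∀ (a : A) (α : I → ℤ), α ∈ C.roots a → (∀ i, 0 ≤ α i) ∨ (∀ i, α i ≤ 0)) ∧
  (∀ (a : A) (i : I) (α : I → ℤ), α ∈ C.roots a → (∃ z : ℤ, α = z • Pi.single i 1) →
    α = Pi.single i 1 ∨ α = -Pi.single i 1) ∧
  (∀ (a : A) (i j : I), i ≠ j →
    (fun x => C.ρ i (C.ρ j x))^[(C.roots a ∩
      {α | ∃ m n : ℕ, α = (m : ℤ) • Pi.single i 1 + (n : ℤ) • Pi.single j 1}).ncard] a = a)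

variable {C}

/-- `I_L(w)`: the set of simple reflections with target `w.tgt` below `w` in weak order. -/
def IL (w : Mor C) : Set I := {i | weakLe (sgen C w.tgt i) w}

/-- `m` is the longest element of `Hom(-,a) ∩ W_J(C)`, i.e. `w_J` at the object `a`. -/
def IsLongestPar (a : A) (J : Set I) (m : Mor C) : Prop :=
  m.tgt = a ∧ InParabolic J m ∧
    ∀ x : Mor C, x.tgt = a → InParabolic J x → weakLe x m

/-- `m` is the longest element `w_I` of `Hom(-,a)`. -/
def IsLongestAt (a : A) (m : Mor C) : Prop :=
  m.tgt = a ∧ ∀ x : Mor C, x.tgt = a → weakLe x m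

/-- `z` is the meet of `x` and `y` in `(Hom(-,a), ≤_R)`. -/
def IsMeet (a : A) (x y z : Mor C) : Prop :=
  z.tgt = a ∧ weakLe z x ∧ weakLe z y ∧
    ∀ t : Mor C, t.tgt = a → weakLe t x → weakLe t y → weakLe t z

/-- `z` is the join of `x` and `y` in `(Hom(-,a), ≤_R)`. -/
def IsJoin (a : A) (x y z : Mor C) : Prop :=
  z.tgt = a ∧ weakLe x z ∧ weakLe y z ∧
    ∀ t : Mor C, t.tgt = a → weakLe x t → weakLe y t → weakLe z t

/-- The left coset `u W_J(C) ⊆ Hom(-, u.tgt)`. -/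
def leftCoset (u : Mor C) (J : Set I) : Set (Mor C) :=
  {x | ∃ v : Mor C, InParabolic J v ∧ v.tgt = u.src ∧ x = u.comp v}

end CartanScheme

variable {I A : Type} [Fintype I] [DecidableEq I] [Fintype A] [Nonempty A] [DecidableEq A]

open CartanScheme


/-- The restriction `C|_J` of a Cartan scheme to a subset `J ⊆ I`. -/
def CartanScheme.restrict (C : CartanScheme I A) (J : Finset I) : CartanScheme (↥J) A where
  ρ := fun j a => C.ρ j a
  c := fun a j k => C.c a j k
  ρ_invol := fun j a => C.ρ_invol j a
  c_diag := fun a j => C.c_diag a j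
  c_offdiag_nonpos := fun a j k h => C.c_offdiag_nonpos a j k (fun e => h (Subtype.ext e))
  c_zero_symm := fun a j k h => C.c_zero_symm a j k h
  c_rho := fun a j k => C.c_rho a j k

/-- `Φ` is a functor `W(C|_J) → W(C)` which is the identity on objects and sends
`σ_j^a` to `σ_j^a`. -/
def IsRestrictionFunctor (C : CartanScheme I A) (J : Finset I)
    (Φ : Mor (C.restrict J) → Mor C) : Prop :=
  (∀ w : Mor (C.restrict J), (Φ w).src = w.src ∧ (Φ w).tgt = w.tgt) ∧
  (∀ a : A, Φ (idMor (C.restrict J) a) = idMor C a) ∧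
  (∀ u v : Mor (C.restrict J), v.tgt = u.src → Φ (u.comp v) = (Φ u).comp (Φ v)) ∧
  (∀ (j : ↥J) (a : A), Φ (genMor (C.restrict J) j a) = genMor C (j : I) a)

section Aux

namespace CartanScheme

variable (C : CartanScheme I A)

/-- The morphism determined by a word. -/
def wordMor (a : A) (l : List I) : Mor C :=
  ⟨a, C.wordTarget a l, C.wordMap a l, ⟨l, rfl, rfl⟩⟩

theorem sigma_sigma (a : A) (i : I) (v : I → ℤ) :
    C.sigma (C.ρ i a) i (C.sigma a i v) = v := by
  funext k
  simp only [sigma, C.c_rho, mul_sub, mul_ite, mul_zero, Finset.sum_sub_distrib,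
    Finset.sum_ite_eq', Finset.mem_univ, if_true, C.c_diag]
  by_cases hk : k = i <;> simp [hk] <;> ring

theorem wordMap_cons (a : A) (i : I) (l : List I) (v : I → ℤ) :
    C.wordMap a (i :: l) v = C.sigma (C.wordTarget a l) i (C.wordMap a l v) := rfl

theorem wordTarget_reverse (a : A) (l : List I) :
    C.wordTarget (C.wordTarget a l) l.reverse = a := by
  induction l with
  | nil => rfl
  | cons i t ih =>
    rw [List.reverse_cons, wordTarget_append]
    have h1 : C.wordTarget (C.wordTarget a (i :: t)) [i] = C.wordTarget a t := by
      show C.ρ i (C.ρ i (C.wordTarget a t)) = _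
      rw [C.ρ_invol]
    rw [h1, ih]

theorem wordMap_reverse (a : A) (l : List I) (v : I → ℤ) :
    C.wordMap (C.wordTarget a l) l.reverse (C.wordMap a l v) = v := by
  induction l generalizing v with
  | nil => rfl
  | cons i t ih =>
    rw [List.reverse_cons, wordMap_append]
    have h1 : C.wordTarget (C.wordTarget a (i :: t)) [i] = C.wordTarget a t := by
      show C.ρ i (C.ρ i (C.wordTarget a t)) = _
      rw [C.ρ_invol]
    have h2 : ∀ w, C.wordMap (C.wordTarget a (i :: t)) [i] w
        = C.sigma (C.wordTarget a (i :: t)) i w := fun w => rfl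
    simp only [Function.comp_apply, h1, h2]
    rw [wordMap_cons]
    have : C.wordTarget a (i :: t) = C.ρ i (C.wordTarget a t) := rfl
    rw [this, sigma_sigma]
    exact ih v

theorem sigma_add (a : A) (i : I) (u v : I → ℤ) :
    C.sigma a i (u + v) = C.sigma a i u + C.sigma a i v := by
  funext k
  simp only [sigma, Pi.add_apply, mul_add, Finset.sum_add_distrib]
  by_cases hk : k = i <;> simp [hk] <;> ring

theorem sigma_smul (a : A) (i : I) (z : ℤ) (v : I → ℤ) :
    C.sigma a i (z • v) = z • C.sigma a i v := by
  funext k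
  simp only [sigma, Pi.smul_apply, smul_eq_mul, mul_left_comm, ← Finset.mul_sum]
  by_cases hk : k = i <;> simp [hk] <;> ring

theorem wordMap_add (a : A) (l : List I) (u v : I → ℤ) :
    C.wordMap a l (u + v) = C.wordMap a l u + C.wordMap a l v := by
  induction l generalizing u v with
  | nil => rfl
  | cons i t ih => rw [wordMap_cons, ih, sigma_add, wordMap_cons, wordMap_cons]

theorem wordMap_smul (a : A) (l : List I) (z : ℤ) (v : I → ℤ) :
    C.wordMap a l (z • v) = z • C.wordMap a l v := by
  induction l generalizing v with
  | nil => rfl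
  | cons i t ih => rw [wordMap_cons, ih, sigma_smul, wordMap_cons]

theorem wordMap_sum (a : A) (l : List I) {κ : Type} (s : Finset κ) (f : κ → I → ℤ) :
    C.wordMap a l (∑ x ∈ s, f x) = ∑ x ∈ s, C.wordMap a l (f x) := by
  classical
  induction s using Finset.induction with
  | empty =>
    have : C.wordMap a l 0 = 0 := by
      have := C.wordMap_smul a l 0 0
      simpa using this
    simpa using this
  | insert _ _ hx ih =>
    rw [Finset.sum_insert hx, Finset.sum_insert hx, wordMap_add, ih]

variable {C}

/-- Coordinates outside `J` are untouched by a word over `J`. -/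
theorem wordMap_apply_of_not_mem {J : Finset I} {l : List I} (hl : ∀ j ∈ l, j ∈ J)
    (a : A) (v : I → ℤ) {i : I} (hi : i ∉ J) :
    C.wordMap a l v i = v i := by
  induction l generalizing v with
  | nil => rfl
  | cons j t ih =>
    rw [wordMap_cons]
    have hj : j ∈ J := hl j (by simp)
    have hij : i ≠ j := fun h => hi (h ▸ hj)
    simp only [sigma, hij, if_false, sub_zero]
    exact ih (fun x hx => hl x (by simp [hx])) v

end CartanScheme

variable {C : CartanScheme I A} {J : Finset I}

/-- Extension by zero `ℤ^J → ℤ^I`. -/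
def extJ (J : Finset I) (v : ↥J → ℤ) : I → ℤ :=
  fun i => if h : i ∈ J then v ⟨i, h⟩ else 0

theorem extJ_apply_mem (v : ↥J → ℤ) {i : I} (h : i ∈ J) :
    extJ J v i = v ⟨i, h⟩ := dif_pos h

theorem extJ_restrict {v : I → ℤ} (hv : ∀ i, i ∉ J → v i = 0) :
    extJ J (fun j => v (j : I)) = v := by
  funext i
  by_cases h : i ∈ J
  · simp [extJ, h]
  · simp [extJ, h, hv i h]

theorem sigma_extJ (a : A) (j : ↥J) (v : ↥J → ℤ) :
    C.sigma a (j : I) (extJ J v) = extJ J ((C.restrict J).sigma a j v) := by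
  funext i
  by_cases h : i ∈ J
  · have hsum : ∑ k, C.c a (j : I) k * extJ J v k
        = ∑ k : ↥J, (C.restrict J).c a j k * v k := by
      have h1 : ∑ k ∈ J, C.c a (j : I) k * extJ J v k
          = ∑ k, C.c a (j : I) k * extJ J v k :=
        Finset.sum_subset (Finset.subset_univ J) (fun x _ hx => by simp [extJ, hx])
      rw [← h1, ← Finset.sum_coe_sort J (fun k => C.c a (j : I) k * extJ J v k)]
      apply Finset.sum_congr rfl
      intro k _
      show C.c a (j : I) (k : I) * extJ J v (k : I) = C.c a (j : I) (k : I) * v k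
      rw [extJ_apply_mem v k.2]
    simp only [CartanScheme.sigma]
    rw [hsum, extJ_apply_mem v h, extJ_apply_mem _ h]
    show v ⟨i, h⟩ - _ = v ⟨i, h⟩ - _
    congr 1
    by_cases hij : i = (j : I)
    · rw [if_pos hij, if_pos (Subtype.ext hij)]
    · rw [if_neg hij, if_neg (fun e => hij (congrArg Subtype.val e))]
  · have hij : i ≠ (j : I) := fun e => h (e ▸ j.2)
    simp [CartanScheme.sigma, extJ, h, hij]

theorem wordTarget_restrict (a : A) (l : List ↥J) :
    (C.restrict J).wordTarget a l = C.wordTarget a (l.map Subtype.val) := by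
  induction l with
  | nil => rfl
  | cons j t ih =>
    show C.ρ (j : I) ((C.restrict J).wordTarget a t) = _
    rw [ih]; rfl

theorem wordMap_extJ (a : A) (l : List ↥J) (v : ↥J → ℤ) :
    C.wordMap a (l.map Subtype.val) (extJ J v)
      = extJ J ((C.restrict J).wordMap a l v) := by
  induction l generalizing v with
  | nil => rfl
  | cons j t ih =>
    rw [List.map_cons, CartanScheme.wordMap_cons, ih, ← wordTarget_restrict, sigma_extJ]
    rfl

theorem extJ_injective : Function.Injective (extJ (J := J)) := by
  intro u v h
  funext j
  have := congrFun h (j : I)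
  rwa [extJ_apply_mem u j.2, extJ_apply_mem v j.2, Subtype.eta] at this

/-- Key lemma: a word over `J` whose restricted action is trivial acts trivially on `ℤ^I`. -/
theorem wordMap_eq_id (hC : C.IsFRS) {l : List I} (hl : ∀ j ∈ l, j ∈ J) {a : A}
    (hT : C.wordTarget a l = a)
    (hfix : ∀ v : I → ℤ, (∀ i, i ∉ J → v i = 0) → C.wordMap a l v = v) :
    C.wordMap a l = id := by
  have hrev_tgt : C.wordTarget a l.reverse = a := by
    have := C.wordTarget_reverse a l; rwa [hT] at this
  have hMM' : ∀ v, C.wordMap a l.reverse (C.wordMap a l v) = v := by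
    intro v; have := C.wordMap_reverse a l v; rwa [hT] at this
  have hM'M : ∀ v, C.wordMap a l (C.wordMap a l.reverse v) = v := by
    intro v
    have := C.wordMap_reverse a l.reverse v
    rwa [hrev_tgt, List.reverse_reverse] at this
  have hbasis : ∀ i, C.wordMap a l (Pi.single i 1) = Pi.single i 1 := by
    intro i
    by_cases hi : i ∈ J
    · exact hfix _ (fun k hk => Pi.single_eq_of_ne (fun e => hk (by rw [e]; exact hi)) 1)
    · set α : I → ℤ := C.wordMap a l (Pi.single i 1) with hα
      set α' : I → ℤ := C.wordMap a l.reverse (Pi.single i 1) with hα'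
      have hαmem : α ∈ C.roots a := ⟨a, l, i, hT, rfl⟩
      have hα'mem : α' ∈ C.roots a := ⟨a, l.reverse, i, hrev_tgt, rfl⟩
      have hαi : α i = 1 := by
        rw [hα, wordMap_apply_of_not_mem hl a _ hi, Pi.single_eq_same]
      have hα'i : α' i = 1 := by
        rw [hα', wordMap_apply_of_not_mem (fun j hj => hl j (List.mem_reverse.mp hj)) a _ hi,
          Pi.single_eq_same]
      have hαpos : ∀ k, 0 ≤ α k := by
        rcases hC.2.1 a α hαmem with h | h
        · exact h
        · exact absurd (hαi ▸ h i) (by norm_num)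
      have hα'pos : ∀ k, 0 ≤ α' k := by
        rcases hC.2.1 a α' hα'mem with h | h
        · exact h
        · exact absurd (hα'i ▸ h i) (by norm_num)
      set β' : I → ℤ := α' - Pi.single i 1 with hβ'
      have hβ'supp : ∀ k, k ∉ J → β' k = 0 := by
        intro k hk
        have : α' k = (Pi.single i 1 : I → ℤ) k := by
          rw [hα', wordMap_apply_of_not_mem (fun j hj => hl j (List.mem_reverse.mp hj)) a _ hk]
        simp [hβ', Pi.sub_apply, this]
      have hβ'pos : ∀ k, 0 ≤ β' k := by
        intro k
        by_cases hk : k ∈ J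
        · have hki : k ≠ i := fun e => hi (e ▸ hk)
          have : β' k = α' k := by simp [hβ', Pi.single_eq_of_ne hki]
          rw [this]; exact hα'pos k
        · rw [hβ'supp k hk]
      have hMβ' : C.wordMap a l β' = β' := hfix β' hβ'supp
      have hkey : Pi.single i 1 = α + β' := by
        have h1 : C.wordMap a l α' = Pi.single i 1 := hM'M _
        have h2 : α' = Pi.single i 1 + β' := by rw [hβ']; ring
        rw [h2, C.wordMap_add, hMβ', ← hα] at h1
        exact h1.symm
      funext k
      by_cases hk : k ∈ J
      · have hki : k ≠ i := fun e => hi (e ▸ hk)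
        have h0 : α k + β' k = 0 := by
          have := congrFun hkey k
          rwa [Pi.single_eq_of_ne hki, Pi.add_apply, eq_comm] at this
        have hαk : α k = 0 := le_antisymm (by linarith [hβ'pos k]) (hαpos k)
        rw [Pi.single_eq_of_ne hki]; exact hαk
      · have : β' k = 0 := hβ'supp k hk
        have := congrFun hkey k
        simp only [Pi.add_apply, ‹β' k = 0›, add_zero] at this
        exact this.symm
  funext v
  have hv : v = ∑ k, (v k) • (Pi.single k 1 : I → ℤ) := by
    conv_lhs => rw [← Finset.univ_sum_single v]
    apply Finset.sum_congr rfl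
    intro k _
    rw [← Pi.single_smul, smul_eq_mul, mul_one]
  calc C.wordMap a l v = C.wordMap a l (∑ k, (v k) • (Pi.single k 1 : I → ℤ)) := by rw [← hv]
    _ = ∑ k, C.wordMap a l ((v k) • (Pi.single k 1 : I → ℤ)) := C.wordMap_sum a l _ _
    _ = ∑ k, (v k) • C.wordMap a l (Pi.single k 1) := by
        apply Finset.sum_congr rfl; intro k _; rw [C.wordMap_smul]
    _ = ∑ k, (v k) • (Pi.single k 1 : I → ℤ) := by
        apply Finset.sum_congr rfl; intro k _; rw [hbasis k]
    _ = v := hv.symm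

/-- Coherence: two words over `J` realizing the same restricted morphism give the same
map on `ℤ^I`. -/
theorem wordMap_coherent (hC : C.IsFRS) (a : A) (l l' : List ↥J)
    (hT : (C.restrict J).wordTarget a l = (C.restrict J).wordTarget a l')
    (hM : (C.restrict J).wordMap a l = (C.restrict J).wordMap a l') :
    C.wordMap a (l.map Subtype.val) = C.wordMap a (l'.map Subtype.val) := by
  set L : List I := l.map Subtype.val with hL
  set L' : List I := l'.map Subtype.val with hL'
  have htL : C.wordTarget a L = (C.restrict J).wordTarget a l := (wordTarget_restrict a l).symm
  have htL' : C.wordTarget a L' = (C.restrict J).wordTarget a l' := (wordTarget_restrict a l').symm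

  set m : List I := L'.reverse ++ L with hm
  have hmm : m = (l'.reverse ++ l).map Subtype.val := by
    rw [hm, List.map_append, List.map_reverse]
  have hml : ∀ j ∈ m, j ∈ J := by
    intro j hj
    rw [hmm] at hj
    obtain ⟨x, _, hx⟩ := List.mem_map.mp hj
    exact hx ▸ x.2
  have hmT : C.wordTarget a m = a := by
    rw [hm, wordTarget_append, htL, hT, ← htL', C.wordTarget_reverse a L']
  have hmfix : ∀ v : I → ℤ, (∀ i, i ∉ J → v i = 0) → C.wordMap a m v = v := by
    intro v hv
    have hve : v = extJ J (fun j => v (j : I)) := (extJ_restrict hv).symm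
    rw [hve, hmm, wordMap_extJ]
    refine congrArg (extJ J) ?_
    rw [(C.restrict J).wordMap_append a l'.reverse l]
    simp only [Function.comp_apply]
    rw [congrFun hM, hT]
    exact (C.restrict J).wordMap_reverse a l' _
  have hid : C.wordMap a m = id := wordMap_eq_id hC hml hmT hmfix
  have hleft : ∀ x, C.wordMap a L' (C.wordMap (C.wordTarget a L') L'.reverse x) = x := by
    intro x
    have h := C.wordMap_reverse (C.wordTarget a L') L'.reverse x
    rwa [C.wordTarget_reverse a L', List.reverse_reverse] at h
  have hinj : Function.Injective (C.wordMap (C.wordTarget a L') L'.reverse) := by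
    intro x y hxy
    rw [← hleft x, hxy, hleft y]
  have hTT : C.wordTarget a L = C.wordTarget a L' := by rw [htL, hT, htL']
  rw [hm, C.wordMap_append, hTT] at hid
  funext v
  have h1 : C.wordMap (C.wordTarget a L') L'.reverse (C.wordMap a L v) = v := congrFun hid v
  have h2 : C.wordMap (C.wordTarget a L') L'.reverse (C.wordMap a L' v) = v :=
    C.wordMap_reverse a L' v
  exact hinj (h1.trans h2.symm)

theorem comp_src {u v : Mor C} (h : v.tgt = u.src) : (u.comp v).src = v.src := by
  simp only [Mor.comp, dif_pos h]

theorem comp_tgt {u v : Mor C} (h : v.tgt = u.src) : (u.comp v).tgt = u.tgt := by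
  simp only [Mor.comp, dif_pos h]

theorem comp_toFun {u v : Mor C} (h : v.tgt = u.src) :
    (u.comp v).toFun = u.toFun ∘ v.toFun := by
  simp only [Mor.comp, dif_pos h]

theorem mor_eq_wordMor {w : Mor C} {l : List I} (h : Realizes w l) :
    w = C.wordMor w.src l :=
  Mor.ext rfl h.1.symm h.2.symm

theorem wordMor_realizes (a : A) (l : List I) : Realizes (C.wordMor a l) l := ⟨rfl, rfl⟩

theorem wordMor_cons (a : A) (i : I) (l : List I) :
    C.wordMor a (i :: l) = (C.genMor i (C.wordTarget a l)).comp (C.wordMor a l) := by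
  have h : (C.wordMor a l).tgt = (C.genMor i (C.wordTarget a l)).src := rfl
  refine Mor.ext ?_ ?_ ?_
  · rw [comp_src h]; rfl
  · rw [comp_tgt h]; rfl
  · rw [comp_toFun h]; rfl

/-- The canonical functor `W(C|_J) → W(C)`. -/
noncomputable def Phi0 (C : CartanScheme I A) (J : Finset I) :
    Mor (C.restrict J) → Mor C := fun w =>
  ⟨w.src, w.tgt, C.wordMap w.src ((Classical.choose w.spec).map Subtype.val),
   ⟨(Classical.choose w.spec).map Subtype.val, by
      rw [← wordTarget_restrict]; exact (Classical.choose_spec w.spec).1, rfl⟩⟩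

theorem Phi0_src (w : Mor (C.restrict J)) : (Phi0 C J w).src = w.src := rfl

theorem Phi0_tgt (w : Mor (C.restrict J)) : (Phi0 C J w).tgt = w.tgt := rfl

theorem Phi0_eq (hC : C.IsFRS) {w : Mor (C.restrict J)} {l : List ↥J} (h : Realizes w l) :
    Phi0 C J w = C.wordMor w.src (l.map Subtype.val) := by
  obtain ⟨hc1, hc2⟩ := Classical.choose_spec w.spec
  have hMap : C.wordMap w.src ((Classical.choose w.spec).map Subtype.val)
      = C.wordMap w.src (l.map Subtype.val) :=
    wordMap_coherent hC w.src _ l (by rw [hc1, h.1]) (by rw [hc2, h.2])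
  refine Mor.ext rfl ?_ ?_
  · show w.tgt = C.wordTarget w.src (l.map Subtype.val)
    rw [← wordTarget_restrict, h.1]
  · exact hMap

theorem Phi0_isRestrictionFunctor (hC : C.IsFRS) : IsRestrictionFunctor C J (Phi0 C J) := by
  refine ⟨fun w => ⟨rfl, rfl⟩, ?_, ?_, ?_⟩
  · intro a
    have h : Realizes (idMor (C.restrict J) a) ([] : List ↥J) := ⟨rfl, rfl⟩
    rw [Phi0_eq hC h]
    exact Mor.ext rfl rfl rfl
  · intro u v h
    obtain ⟨lu, hu1, hu2⟩ := u.spec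
    obtain ⟨lv, hv1, hv2⟩ := v.spec
    have hcs : (u.comp v).src = v.src := comp_src h
    have hre : Realizes (u.comp v) (lu ++ lv) := by
      constructor
      · rw [hcs, (C.restrict J).wordTarget_append, hv1, h, hu1, comp_tgt h]
      · rw [hcs, (C.restrict J).wordMap_append, hv1, h, hu2, hv2, comp_toFun h]
    rw [Phi0_eq hC hre, Phi0_eq hC (⟨hu1, hu2⟩ : Realizes u lu),
      Phi0_eq hC (⟨hv1, hv2⟩ : Realizes v lv)]
    have h' : (C.wordMor v.src (lv.map Subtype.val)).tgt
        = (C.wordMor u.src (lu.map Subtype.val)).src := by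
      show C.wordTarget v.src (lv.map Subtype.val) = u.src
      rw [← wordTarget_restrict, hv1, h]
    refine Mor.ext ?_ ?_ ?_
    · rw [comp_src h']; exact hcs
    · rw [comp_tgt h']
      show C.wordTarget (u.comp v).src ((lu ++ lv).map Subtype.val)
        = C.wordTarget u.src (lu.map Subtype.val)
      rw [hcs, List.map_append, wordTarget_append, ← wordTarget_restrict v.src lv, hv1, h]
    · rw [comp_toFun h']
      show C.wordMap (u.comp v).src ((lu ++ lv).map Subtype.val)
        = C.wordMap u.src (lu.map Subtype.val) ∘ C.wordMap v.src (lv.map Subtype.val)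
      rw [hcs, List.map_append, wordMap_append, ← wordTarget_restrict v.src lv, hv1, h]
  · intro j a
    have h : Realizes (genMor (C.restrict J) j a) [j] :=
      ⟨rfl, Function.comp_id _⟩
    rw [Phi0_eq hC h]
    exact Mor.ext rfl rfl (Function.comp_id _)

theorem functor_wordMor {Φ : Mor (C.restrict J) → Mor C} (hΦ : IsRestrictionFunctor C J Φ)
    (a : A) (l : List ↥J) :
    Φ ((C.restrict J).wordMor a l) = C.wordMor a (l.map Subtype.val) := by
  induction l with
  | nil =>
    have h0 : (C.restrict J).wordMor a [] = idMor (C.restrict J) a := Mor.ext rfl rfl rfl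
    rw [h0, hΦ.2.1]
    exact Mor.ext rfl rfl rfl
  | cons j t ih =>
    rw [wordMor_cons (C := C.restrict J) a j t, hΦ.2.2.1 _ _ rfl, hΦ.2.2.2, ih,
      wordTarget_restrict a t, List.map_cons]
    exact (wordMor_cons (C := C) a (j : I) (t.map Subtype.val)).symm

theorem functor_unique (hC : C.IsFRS) {Φ : Mor (C.restrict J) → Mor C}
    (hΦ : IsRestrictionFunctor C J Φ) : Φ = Phi0 C J := by
  funext w
  obtain ⟨l, h1, h2⟩ := w.spec
  have hw : w = (C.restrict J).wordMor w.src l := mor_eq_wordMor ⟨h1, h2⟩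
  rw [hw, functor_wordMor hΦ]
  exact (Phi0_eq hC (wordMor_realizes (C := C.restrict J) w.src l)).symm

theorem Phi0_injective : Function.Injective (Phi0 C J) := by
  intro u v h
  have hsrc : u.src = v.src := by rw [← Phi0_src u, ← Phi0_src v, h]
  have htgt : u.tgt = v.tgt := by rw [← Phi0_tgt u, ← Phi0_tgt v, h]
  refine Mor.ext hsrc htgt ?_
  funext x
  apply extJ_injective (J := J)
  have hu : extJ J (u.toFun x) = (Phi0 C J u).toFun (extJ J x) := by
    rw [← (Classical.choose_spec u.spec).2]
    exact (wordMap_extJ u.src (Classical.choose u.spec) x).symm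
  have hv : extJ J (v.toFun x) = (Phi0 C J v).toFun (extJ J x) := by
    rw [← (Classical.choose_spec v.spec).2]
    exact (wordMap_extJ v.src (Classical.choose v.spec) x).symm
  rw [hu, hv, h]

theorem Phi0_range (hC : C.IsFRS) :
    Set.range (Phi0 C J) = {w : Mor C | InParabolic (↑J : Set I) w} := by
  ext w
  constructor
  · rintro ⟨u, rfl⟩
    obtain ⟨hc1, hc2⟩ := Classical.choose_spec u.spec
    refine ⟨(Classical.choose u.spec).map Subtype.val, ?_, ?_, rfl⟩
    · intro i hi
      obtain ⟨x, _, hx⟩ := List.mem_map.mp hi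
      exact Finset.mem_coe.mpr (hx ▸ x.2)
    · show C.wordTarget (Phi0 C J u).src ((Classical.choose u.spec).map Subtype.val)
        = (Phi0 C J u).tgt
      rw [← wordTarget_restrict]
      exact hc1
  · rintro ⟨l, hlJ, hre⟩
    have hl' : ∀ i ∈ l, i ∈ J := fun i hi => Finset.mem_coe.mp (hlJ i hi)
    refine ⟨(C.restrict J).wordMor w.src (l.pmap (fun i h => (⟨i, h⟩ : ↥J)) hl'), ?_⟩
    rw [Phi0_eq hC (wordMor_realizes (C := C.restrict J) w.src _)]
    have hmap : (l.pmap (fun i h => (⟨i, h⟩ : ↥J)) hl').map Subtype.val = l := by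
      rw [List.map_pmap]
      exact List.pmap_eq_map (f := id) (l := l) hl' |>.trans (List.map_id l)
    have : ((C.restrict J).wordMor w.src (l.pmap (fun i h => (⟨i, h⟩ : ↥J)) hl')).src
        = w.src := rfl
    rw [this, hmap]
    exact (mor_eq_wordMor hre).symm

end Aux

/-- There is a unique functor `W(C|_J) → W(C)` which is the identity on objects
and sends `σ_j^a` to `σ_j^a`, and it is an isomorphism of groupoids onto `W_J(C)`. -/
theorem restriction_functor_unique_iso (C : CartanScheme I A) (hC : C.IsFRS) (J : Finset I) :
    (∃! Φ : Mor (C.restrict J) → Mor C, IsRestrictionFunctor C J Φ) ∧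
    (∀ Φ : Mor (C.restrict J) → Mor C, IsRestrictionFunctor C J Φ →
      Function.Injective Φ ∧
      Set.range Φ = {w : Mor C | InParabolic (↑J : Set I) w}) := by
  constructor
  · exact ⟨Phi0 C J, Phi0_isRestrictionFunctor hC, fun Φ hΦ => functor_unique hC hΦ⟩
  · intro Φ hΦ
    rw [functor_unique hC hΦ]
    exact ⟨Phi0_injective, Phi0_range hC⟩
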